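/- Let L be a lattice of rank n in R^{n+1} contained in a hyperplane H, let D be a Delaunay polytope of L with circumcenter c ∈ H, and let e ∈ R^{n+1} \ H. Then the vertex sets vert D and e − vert D lie on a common sphere centered at e/2 if and only if the vector 2c − e is orthogonal to H. -/

import Mathlib

open scoped InnerProductSpace

/-- Let `L` be a rank-`n` lattice inside a hyperplane `H ⊂ ℝ^{n+1}`, `D` a
(full-dimensional in `H`) Delaunay polytope of `L` with circumcenter `c ∈ H`,
and `e ∉ H`.  Then `vert D` and `e − vert D` lie on a common sphere centered at
`e/2` if and only if `2c − e` is orthogonal to `H`. -/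
theorem stmt_13 (n : ℕ) (H : Submodule ℝ (EuclideanSpace ℝ (Fin (n + 1))))
    (hH : Module.finrank ℝ H = n)
    (v : Fin n → EuclideanSpace ℝ (Fin (n + 1))) (hli : LinearIndependent ℝ v)
    (hvH : ∀ i, v i ∈ H)
    (L : AddSubgroup (EuclideanSpace ℝ (Fin (n + 1))))
    (hL : (L : Set (EuclideanSpace ℝ (Fin (n + 1)))) = ↑(Submodule.span ℤ (Set.range v)))
    (c : EuclideanSpace ℝ (Fin (n + 1))) (hc : c ∈ H) (r : ℝ) (hr : 0 < r)
    (hempty : ∀ y ∈ L, r ≤ dist c y)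
    (vert : Set (EuclideanSpace ℝ (Fin (n + 1))))
    (hvert : vert = {y | y ∈ L ∧ dist c y = r})
    (hfull : (affineSpan ℝ vert : Set (EuclideanSpace ℝ (Fin (n + 1)))) = (H : Set _))
    (e : EuclideanSpace ℝ (Fin (n + 1))) (he : e ∉ H) :
    (∃ ρ : ℝ, (∀ w ∈ vert, dist w ((1 / 2 : ℝ) • e) = ρ) ∧
        (∀ w ∈ vert, dist (e - w) ((1 / 2 : ℝ) • e) = ρ)) ↔
      ∀ h ∈ H, ⟪(2 : ℝ) • c - e, h⟫_ℝ = 0 := by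
  set u := (2 : ℝ) • c - e with hu
  have hdist2 : ∀ w : EuclideanSpace ℝ (Fin (n + 1)),
      dist (e - w) ((1 / 2 : ℝ) • e) = dist w ((1 / 2 : ℝ) • e) := by
    intro w
    rw [dist_eq_norm, dist_eq_norm]
    have h1 : e - w - (1 / 2 : ℝ) • e = -(w - (1 / 2 : ℝ) • e) := by
      module
    rw [h1, norm_neg]
  have hvertH : vert ⊆ (H : Set _) := by
    rw [← hfull]; exact subset_affineSpan ℝ vert
  have hkey : ∀ w : EuclideanSpace ℝ (Fin (n + 1)),
      ‖w - (1 / 2 : ℝ) • e‖ ^ 2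
        = ‖w - c‖ ^ 2 + ⟪u, w - c⟫_ℝ + ‖c - (1 / 2 : ℝ) • e‖ ^ 2 := by
    intro w
    have h1 : w - (1 / 2 : ℝ) • e = (w - c) + (c - (1 / 2 : ℝ) • e) := by abel
    rw [h1, norm_add_sq_real]
    have h2 : ⟪u, w - c⟫_ℝ = 2 * ⟪w - c, c - (1 / 2 : ℝ) • e⟫_ℝ := by
      rw [real_inner_comm, hu]
      have h3 : (2 : ℝ) • c - e = (2 : ℝ) • (c - (1 / 2 : ℝ) • e) := by module
      rw [h3, real_inner_smul_right]
    rw [h2]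
  constructor
  · rintro ⟨ρ, hρ, -⟩
    intro h hh
    -- h ∈ vectorSpan ℝ vert
    have h0 : (0 : EuclideanSpace ℝ (Fin (n + 1))) ∈ affineSpan ℝ vert := by
      have : (0 : EuclideanSpace ℝ (Fin (n + 1))) ∈ (affineSpan ℝ vert : Set _) := by
        rw [hfull]; exact H.zero_mem
      exact this
    have hh' : h ∈ affineSpan ℝ vert := by
      have : h ∈ (affineSpan ℝ vert : Set _) := by rw [hfull]; exact hh
      exact this
    have hmem : h ∈ vectorSpan ℝ vert := by
      have := AffineSubspace.vsub_mem_direction hh' h0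
      rwa [direction_affineSpan, vsub_eq_sub, sub_zero] at this
    -- show ⟪u, ·⟫ vanishes on vectorSpan
    have hker : vectorSpan ℝ vert ≤ LinearMap.ker (((innerSL ℝ u) :
        EuclideanSpace ℝ (Fin (n + 1)) →L[ℝ] ℝ) : EuclideanSpace ℝ (Fin (n + 1)) →ₗ[ℝ] ℝ) := by
      rw [vectorSpan_def]
      apply Submodule.span_le.mpr
      rintro x ⟨a, ha, b, hb, rfl⟩
      have hra : ‖a - c‖ = r := by
        have := (hvert ▸ ha).2
        rw [dist_eq_norm] at this
        rw [← norm_neg]; simpa [neg_sub] using this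
      have hrb : ‖b - c‖ = r := by
        have := (hvert ▸ hb).2
        rw [dist_eq_norm] at this
        rw [← norm_neg]; simpa [neg_sub] using this
      have hda : dist a ((1 / 2 : ℝ) • e) = ρ := hρ a ha
      have hdb : dist b ((1 / 2 : ℝ) • e) = ρ := hρ b hb
      have hsq : ‖a - (1 / 2 : ℝ) • e‖ ^ 2 = ‖b - (1 / 2 : ℝ) • e‖ ^ 2 := by
        rw [← dist_eq_norm, ← dist_eq_norm, hda, hdb]
      rw [hkey a, hkey b, hra, hrb] at hsq
      have hab : ⟪u, a - c⟫_ℝ = ⟪u, b - c⟫_ℝ := by linarith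
      simp only [SetLike.mem_coe, LinearMap.mem_ker, ContinuousLinearMap.coe_coe,
        innerSL_apply_apply, vsub_eq_sub]
      have : a - b = (a - c) - (b - c) := by abel
      rw [this, inner_sub_right, hab, sub_self]
    have := hker hmem
    simpa [LinearMap.mem_ker] using this
  · intro horth
    refine ⟨Real.sqrt (r ^ 2 + ‖c - (1 / 2 : ℝ) • e‖ ^ 2), ?_, ?_⟩
    · intro w hw
      have hwc : w - c ∈ H := H.sub_mem (hvertH hw) hc
      have hrw : ‖w - c‖ = r := by
        have := (hvert ▸ hw).2
        rw [dist_eq_norm] at this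
        rw [← norm_neg]; simpa [neg_sub] using this
      have hsq : ‖w - (1 / 2 : ℝ) • e‖ ^ 2 = r ^ 2 + ‖c - (1 / 2 : ℝ) • e‖ ^ 2 := by
        rw [hkey w, hrw, horth _ hwc]; ring
      rw [dist_eq_norm, ← Real.sqrt_sq (norm_nonneg _), hsq]
    · intro w hw
      rw [hdist2 w]
      have hwc : w - c ∈ H := H.sub_mem (hvertH hw) hc
      have hrw : ‖w - c‖ = r := by
        have := (hvert ▸ hw).2
        rw [dist_eq_norm] at this
        rw [← norm_neg]; simpa [neg_sub] using this
      have hsq : ‖w - (1 / 2 : ℝ) • e‖ ^ 2 = r ^ 2 + ‖c - (1 / 2 : ℝ) • e‖ ^ 2 := by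
        rw [hkey w, hrw, horth _ hwc]; ring
      rw [dist_eq_norm, ← Real.sqrt_sq (norm_nonneg _), hsq]
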